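/- There exists a consistent case law database DB, a case description CaseDesc, and a court crt, together with a set F of formulas, such that every f ∈ F is individually permitted in DB under CaseDesc and crt, but the set F is not permitted. (Concretely, with two same-level courts H¹₁, H¹₂ below a court H², and DB containing cases deciding p at H¹₁ and ¬p at H¹₂, the set F = {p, ¬p} is not permitted at crt = H² although each element is.) -/

import Mathlib

/- PriCL: a formalization of the privacy case-law framework.
   The underlying logic is taken semantically: a formula is a predicate on
   possible worlds `W`; entailment, ⊤, ⊥, ∧, ∨, ¬ are the semantic ones,
   which satisfy all requirements of the framework (monotone entailment etc.). -/

open Classical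
noncomputable section

namespace PriCL

/-- Formulas of the underlying logic (semantic view). -/
abbrev Form (W : Type) := W → Prop

namespace Form
variable {W : Type}
/-- Entailment `A ⊨ B`. -/
def ent (A B : Form W) : Prop := ∀ w, A w → B w
def top : Form W := fun _ => True
def bot : Form W := fun _ => False
def and (A B : Form W) : Form W := fun w => A w ∧ B w
def or (A B : Form W) : Form W := fun w => A w ∨ B w
def not (A : Form W) : Form W := fun w => ¬ A w
def imp (A B : Form W) : Form W := fun w => A w → B w
end Form

/-- Conjunction of a finite list of formulas. -/
def conjList {W : Type} (l : List (Form W)) : Form W := l.foldr Form.and Form.top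

/-- Labels of proof-tree leaves: axiom, assessment, or reference to a case id. -/
inductive Lab (CI : Type) where
  | ax : Lab CI
  | assess : Lab CI
  | ref : CI → Lab CI

/-- Proof trees: leaves carry a prerequisite `pre` and a `fact`, inner nodes
    carry a formula and are AND- or OR-steps over finitely many children. -/
inductive PTree (W CI : Type) where
  | leaf (pre fact : Form W) (lab : Lab CI)
  | node (f : Form W) (isAnd : Bool) (n : ℕ) (children : Fin n → PTree W CI)

namespace PTree
variable {W CI : Type}

/-- The formula at the root of the tree (for a leaf, its fact). -/
def rootF : PTree W CI → Form W
  | leaf _ fact _ => fact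
  | node f _ _ _ => f

/-- Prerequisites: AND-nodes conjoin, OR-nodes disjoin children prerequisites. -/
def pres : PTree W CI → Form W
  | leaf pre _ _ => pre
  | node _ true _ c => fun w => ∀ i, (pres (c i)) w
  | node _ false _ c => fun w => ∃ i, (pres (c i)) w

/-- Facts, combined analogously to prerequisites. -/
def facts : PTree W CI → Form W
  | leaf _ fact _ => fact
  | node _ true _ c => fun w => ∀ i, (facts (c i)) w
  | node _ false _ c => fun w => ∃ i, (facts (c i)) w

/-- Condition (iv) of case consistency: each inner node is entailed by the
    conjunction (AND) resp. disjunction (OR) of its children. -/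
def stepsOk : PTree W CI → Prop
  | leaf _ _ _ => True
  | node f true _ c =>
      Form.ent (fun w => ∀ i, rootF (c i) w) f ∧ ∀ i, stepsOk (c i)
  | node f false _ c =>
      Form.ent (fun w => ∃ i, rootF (c i) w) f ∧ ∀ i, stepsOk (c i)

/-- For Axiom leaves we require `pre = fact`. -/
def axOk : PTree W CI → Prop
  | leaf pre fact Lab.ax => pre = fact
  | leaf _ _ _ => True
  | node _ _ _ c => ∀ i, axOk (c i)

/-- The tree contains no Assess-labeled node. -/
def assessFree : PTree W CI → Prop
  | leaf _ _ Lab.assess => False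
  | leaf _ _ _ => True
  | node _ _ _ c => ∀ i, assessFree (c i)

/-- The set of leaves (as pre/fact/label triples). -/
def leaves : PTree W CI → Set (Form W × Form W × Lab CI)
  | leaf pre fact lab => {(pre, fact, lab)}
  | node _ _ _ c => { x | ∃ i, x ∈ leaves (c i) }

/-- The list of leaves, in left-to-right order. -/
def leavesList : PTree W CI → List (Form W × Form W × Lab CI)
  | leaf pre fact lab => [(pre, fact, lab)]
  | node _ _ _ c => (List.ofFn fun i => leavesList (c i)).flatten

/-- All subtrees (= nodes, identified with the subtree rooted there). -/
def subtrees : PTree W CI → Set (PTree W CI)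
  | leaf pre fact lab => {leaf pre fact lab}
  | node f b n c => insert (node f b n c) { t | ∃ i, t ∈ subtrees (c i) }

/-- Replace the precondition of every node in `N` by ⊥ (used for warranting). -/
def blockTree (N : Set (PTree W CI)) : PTree W CI → PTree W CI
  | leaf pre fact lab =>
      if leaf pre fact lab ∈ N then leaf Form.bot fact lab else leaf pre fact lab
  | node f b n c => node f b n (fun i => blockTree N (c i))

end PTree

/-- A case: decision formula, case description, proof tree, and court. -/
structure Case (W CI Court : Type) where
  df : Form W
  desc : Form W
  tree : PTree W CI
  crt : Court

namespace Case
variable {W CI Court : Type}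
def presC (C : Case W CI Court) : Form W := C.tree.pres
def factsC (C : Case W CI Court) : Form W := C.tree.facts
/-- Structural well-formedness: the root carries the decision formula, and
    Axiom leaves have `pre = fact`. -/
def wf (C : Case W CI Court) : Prop := C.tree.rootF = C.df ∧ C.tree.axOk
end Case

/-- Case consistency (Definition "Case Consistency"). -/
def consistentCase {W CI Court : Type} (KB : Form W) (C : Case W CI Court) : Prop :=
  C.wf ∧
  ¬ Form.ent (KB.and C.desc) Form.bot ∧
  Form.ent (KB.and C.desc) C.presC ∧
  ¬ Form.ent ((KB.and C.desc).and C.factsC) Form.bot ∧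
  C.tree.stepsOk

/-- A case law database: world knowledge, the cases in temporal order (the
    list order is the time order ≤ₜ), case identifiers `mu`, court-dependent
    must-agree / may-ref relations, and time-indexed unwarranted nodes `U`. -/
structure CLD (W CI Court : Type) where
  KB : Form W
  cases : List (Case W CI Court)
  mu : ℕ → CI
  mustAgree : Court → Court → Prop
  mayRef : Court → Court → Prop
  U : ℕ → Set (PTree W CI)

namespace CLD
variable {W CI Court : Type}

/-- All unwarranted nodes of the database. -/
def Uall (DB : CLD W CI Court) : Set (PTree W CI) := ⋃ j < DB.cases.length, DB.U j

/-- Warranted (sub)case w.r.t. a set `N` of unwarranted nodes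
    (Definition "Warranted Subcase"). -/
def warrantedCase (DB : CLD W CI Court) (N : Set (PTree W CI)) (C : Case W CI Court) : Prop :=
  consistentCase DB.KB { C with tree := PTree.blockTree N C.tree }

/-- Structural requirements: injective identifiers, must-agree ⊆ may-ref,
    and monotonicity of the unwarranted sets along the timeline. -/
def wfStruct (DB : CLD W CI Court) : Prop :=
  (∀ i j, i < DB.cases.length → j < DB.cases.length → DB.mu i = DB.mu j → i = j) ∧
  (∀ c1 c2, DB.mustAgree c1 c2 → DB.mayRef c1 c2) ∧
  (∀ i j, i ≤ j → DB.U i ⊆ DB.U j)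

def casewiseConsistent (DB : CLD W CI Court) : Prop :=
  ∀ C ∈ DB.cases, consistentCase DB.KB C

/-- Correct referencing of the case `C` sitting at time index `jC`
    (Definition "Correct Case Reference"): each Ref-leaf points to a strictly
    earlier case containing a warranted subcase deciding the fact, may-ref
    holds, and KB ∧ pre entails the referenced prerequisites. -/
def refConsistentAt (DB : CLD W CI Court) (jC : ℕ) (C : Case W CI Court) : Prop :=
  ∀ pre fact id, (pre, fact, Lab.ref id) ∈ C.tree.leaves →
    ∃ jD, jD < jC ∧ ∃ hD : jD < DB.cases.length, DB.mu jD = id ∧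
      ∃ s ∈ (DB.cases.get ⟨jD, hD⟩).tree.subtrees,
        s.rootF = fact ∧
        DB.warrantedCase (DB.U jC)
          ⟨fact, (DB.cases.get ⟨jD, hD⟩).desc, s, (DB.cases.get ⟨jD, hD⟩).crt⟩ ∧
        DB.mayRef C.crt (DB.cases.get ⟨jD, hD⟩).crt ∧
        Form.ent (DB.KB.and pre) s.pres

def refConsistent (DB : CLD W CI Court) : Prop :=
  ∀ j, ∀ h : j < DB.cases.length, DB.refConsistentAt j (DB.cases.get ⟨j, h⟩)

/-- Case conflict (Definition "Case Conflict"): `C2` is warranted w.r.t. `N`,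
    the prerequisites are compatible, the facts contradict, and must-agree
    holds between the courts. -/
def conflict (DB : CLD W CI Court) (N : Set (PTree W CI)) (C1 C2 : Case W CI Court) : Prop :=
  DB.warrantedCase N C2 ∧
  ¬ Form.ent ((DB.KB.and C1.presC).and C2.presC) Form.bot ∧
  Form.ent ((DB.KB.and C1.factsC).and C2.factsC) Form.bot ∧
  DB.mustAgree C1.crt C2.crt

def hierConsistent (DB : CLD W CI Court) : Prop :=
  ∀ j, ∀ h : j < DB.cases.length, ∀ D ∈ DB.cases,
    ¬ DB.conflict (DB.U j) (DB.cases.get ⟨j, h⟩) D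

/-- Consistent warranting: `U` contains every Ref node whose referenced
    subcase is unwarranted. -/
def warrantsConsistently (DB : CLD W CI Court) : Prop :=
  ∀ j, j < DB.cases.length →
  ∀ C ∈ DB.cases, ∀ pre fact id, (pre, fact, Lab.ref id) ∈ C.tree.leaves →
    (∀ jD, ∀ hD : jD < DB.cases.length, DB.mu jD = id →
      ∀ s ∈ (DB.cases.get ⟨jD, hD⟩).tree.subtrees, s.rootF = fact →
        ¬ DB.warrantedCase (DB.U j)
            ⟨fact, (DB.cases.get ⟨jD, hD⟩).desc, s, (DB.cases.get ⟨jD, hD⟩).crt⟩) →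
    PTree.leaf pre fact (Lab.ref id) ∈ DB.U j

/-- Database consistency. -/
def consistent (DB : CLD W CI Court) : Prop :=
  DB.wfStruct ∧ DB.casewiseConsistent ∧ DB.refConsistent ∧
  DB.hierConsistent ∧ DB.warrantsConsistently

/-- Append a new case at the end of the timeline, with a fresh identifier. -/
def snoc (DB : CLD W CI Court) (C : Case W CI Court) (id : CI) : CLD W CI Court :=
  { DB with cases := DB.cases ++ [C],
            mu := fun j => if j = DB.cases.length then id else DB.mu j }

/-- Append several new cases at the end of the timeline. -/
def appendCases (DB : CLD W CI Court) (Cs : List (Case W CI Court)) (ids : ℕ → CI) :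
    CLD W CI Court :=
  { DB with cases := DB.cases ++ Cs,
            mu := fun j => if j < DB.cases.length then DB.mu j else ids (j - DB.cases.length) }

/-- `f` is permitted in `DB` under circumstances `cd` and court `crt`. -/
def permitted (DB : CLD W CI Court) (f cd : Form W) (crt : Court) : Prop :=
  ∃ (C : Case W CI Court) (id : CI),
    C.df = f ∧ C.desc = cd ∧ C.crt = crt ∧ C.tree.assessFree ∧
    (DB.snoc C id).consistent

/-- A finite set (list) `fs` of formulas is permitted: Assess-free cases deciding
    the formulas of `fs` can be inserted, in some order, at the end of the
    timeline, preserving consistency. -/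
def permittedList (DB : CLD W CI Court) (fs : List (Form W)) (cd : Form W) (crt : Court) : Prop :=
  ∃ (Cs : List (Case W CI Court)) (ids : ℕ → CI),
    (Cs.map Case.df).Perm fs ∧
    (∀ C ∈ Cs, C.desc = cd ∧ C.crt = crt ∧ C.tree.assessFree) ∧
    (DB.appendCases Cs ids).consistent

/-- `(pre, fact)` is an Assess-labeled leaf of some case of `DB`. -/
def assessLeaf (DB : CLD W CI Court) (pre fact : Form W) : Prop :=
  ∃ C ∈ DB.cases, (pre, fact, (Lab.assess : Lab CI)) ∈ C.tree.leaves

/-- `A` is a supporting set for `f` under circumstances `cd`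
    (Definition "Supporting set", conditions (1)–(3)). -/
def supports (DB : CLD W CI Court) (cd f : Form W) (A : List (Form W × Form W)) : Prop :=
  (∀ a ∈ A, DB.assessLeaf a.1 a.2) ∧
  Form.ent (DB.KB.and cd) (conjList (A.map Prod.fst)) ∧
  Form.ent ((DB.KB.and cd).and (conjList (A.map Prod.snd))) f ∧
  ¬ Form.ent ((DB.KB.and cd).and (conjList (A.map Prod.snd))) Form.bot

/-- The supporting set is warranted: none of its nodes is unwarranted
    w.r.t. any case of the database. -/
def warrantedSupp (DB : CLD W CI Court) (A : List (Form W × Form W)) : Prop :=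
  ∀ a ∈ A, ∀ j, j < DB.cases.length →
    PTree.leaf a.1 a.2 (Lab.assess : Lab CI) ∉ DB.U j

/-- The trivial proof tree with root ⊤ and one Ref-leaf per element of `A`. -/
def trivialTree (A : List (Form W × Form W)) (ids : ℕ → CI) : PTree W CI :=
  PTree.node Form.top true A.length
    (fun i => PTree.leaf (A.get ⟨i, i.isLt⟩).1 (A.get ⟨i, i.isLt⟩).2 (Lab.ref (ids i)))

/-- The supporting set `A` is consistent with `DB`: adding the trivial case
    referencing all its elements yields a consistent database. -/
def consistentWith (DB : CLD W CI Court) (cd : Form W) (crt : Court)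
    (A : List (Form W × Form W)) : Prop :=
  ∃ (ids : ℕ → CI) (fid : CI),
    (DB.snoc ⟨Form.top, cd, trivialTree A ids, crt⟩ fid).consistent

/-- Replace the case at time index `j`. -/
def replace (DB : CLD W CI Court) (j : ℕ) (C' : Case W CI Court) : CLD W CI Court :=
  { DB with cases := DB.cases.set j C' }

end CLD

end PriCL

namespace PriCL

/-! ### Auxiliary material for the counterexample -/

/-- The atomic formula `p` over worlds `Bool`. -/
def pF : Form Bool := fun w => w = true

/-- Its negation. -/
def npF : Form Bool := Form.not pF

/-- The case deciding `p` at the lower court `0`. -/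
def Cex1 : Case Bool ℕ (Fin 3) := ⟨pF, Form.top, .leaf Form.top pF .assess, 0⟩

/-- The case deciding `¬p` at the lower court `1`. -/
def Cex2 : Case Bool ℕ (Fin 3) := ⟨npF, Form.top, .leaf Form.top npF .assess, 1⟩

/-- The counterexample database. -/
def exDB : CLD Bool ℕ (Fin 3) :=
  { KB := Form.top, cases := [Cex1, Cex2], mu := id,
    mustAgree := fun a b => a = 2 ∧ b = 2,
    mayRef := fun _ _ => True,
    U := fun _ => ∅ }

theorem blockTree_empty {W CI : Type} (t : PTree W CI) : PTree.blockTree ∅ t = t := by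
  induction t with
  | leaf pre fact lab => simp [PTree.blockTree]
  | node f b n c ih =>
    simp only [PTree.blockTree, PTree.node.injEq, heq_eq_eq, true_and]
    funext i; exact ih i

theorem ent_facts_rootF {W CI : Type} (t : PTree W CI) (h : t.stepsOk) :
    Form.ent t.facts t.rootF := by
  induction t with
  | leaf pre fact lab => exact fun w hw => hw
  | node f b n c ih =>
    cases b with
    | true => exact fun w hw => h.1 w (fun i => ih i (h.2 i) w (hw i))
    | false =>
      rcases h with ⟨h1, h2⟩
      exact fun w hw => h1 w (let ⟨i, hi⟩ := hw; ⟨i, ih i (h2 i) w hi⟩)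

/-- Consistency of a case whose tree is a single leaf with trivial prerequisite. -/
theorem cons_leaf {lab : Lab ℕ} (f : Form Bool) (crt : Fin 3) (w0 : Bool) (hw : f w0)
    (hax : PTree.axOk (PTree.leaf (Form.top) f lab)) :
    consistentCase (Form.top : Form Bool) ⟨f, Form.top, PTree.leaf Form.top f lab, crt⟩ := by
  refine ⟨⟨rfl, hax⟩, ?_, ?_, ?_, trivial⟩
  · intro h; exact h true ⟨trivial, trivial⟩
  · intro w _; trivial
  · intro h; exact h w0 ⟨⟨trivial, trivial⟩, hw⟩

theorem exDB_consistent : exDB.consistent := by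
  refine ⟨⟨fun i j _ _ h => h, fun _ _ _ => trivial, fun i j _ => Set.Subset.refl _⟩,
    ?_, ?_, ?_, ?_⟩
  · -- casewise
    intro C hC
    simp only [exDB, List.mem_cons, List.mem_singleton, List.not_mem_nil, or_false] at hC
    rcases hC with rfl | rfl
    · exact cons_leaf pF 0 true rfl trivial
    · exact cons_leaf npF 1 false (by simp [npF, pF, Form.not]) trivial
  · -- refConsistent
    intro j h pre fact id hmem
    have h2 : j < 2 := h
    interval_cases j <;> simp [exDB, Cex1, Cex2, PTree.leaves] at hmem
  · -- hierConsistent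
    intro j h D hD con
    obtain ⟨-, -, -, h4⟩ := con
    have h2 : j < 2 := h
    interval_cases j <;> simp [exDB, Cex1, Cex2, CLD.conflict] at h4
  · -- warrantsConsistently
    intro j hj C hC pre fact id hmem _
    simp only [exDB, List.mem_cons, List.mem_singleton, List.not_mem_nil, or_false] at hC
    rcases hC with rfl | rfl <;> simp [Cex1, Cex2, PTree.leaves] at hmem

theorem snoc_consistent (f : Form Bool) (k : ℕ) (w0 : Bool) (hw : f w0) (crt' : Fin 3)
    (hk : k < 2)
    (hget : [Cex1, Cex2].get ⟨k, hk⟩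
      = ⟨f, Form.top, PTree.leaf Form.top f Lab.assess, crt'⟩) :
    (exDB.snoc ⟨f, Form.top, PTree.leaf Form.top f (Lab.ref k), 2⟩ 2).consistent := by
  set Cnew : Case Bool ℕ (Fin 3) := ⟨f, Form.top, PTree.leaf Form.top f (Lab.ref k), 2⟩
    with hCnew
  have hcons1 : consistentCase (Form.top) Cex1 := cons_leaf pF 0 true rfl trivial
  have hcons2 : consistentCase (Form.top) Cex2 :=
    cons_leaf npF 1 false (by simp [npF, pF, Form.not]) trivial
  have hconsnew : consistentCase (Form.top) Cnew := cons_leaf f 2 w0 hw trivial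
  have hgetk : ∀ hD : k < (exDB.snoc Cnew 2).cases.length,
      (exDB.snoc Cnew 2).cases.get ⟨k, hD⟩
        = ⟨f, Form.top, PTree.leaf Form.top f Lab.assess, crt'⟩ := by
    intro hD
    rw [← hget]
    show ([Cex1, Cex2] ++ [Cnew]).get ⟨k, hD⟩ = [Cex1, Cex2].get ⟨k, hk⟩
    rw [List.get_eq_getElem, List.get_eq_getElem]
    exact List.getElem_append_left hk
  have hmuk : (exDB.snoc Cnew 2).mu k = k := by
    have hne : k ≠ 2 := by omega
    simp [CLD.snoc, exDB, hne]
  have hwarr : ∀ N : Set (PTree Bool ℕ), N = ∅ → (exDB.snoc Cnew 2).warrantedCase N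
      ⟨f, Form.top, PTree.leaf Form.top f Lab.assess, crt'⟩ := by
    rintro N rfl
    unfold CLD.warrantedCase
    rw [blockTree_empty]
    exact cons_leaf f crt' w0 hw trivial
  have hlen3 : (exDB.snoc Cnew 2).cases.length = 3 := rfl
  refine ⟨⟨?_, fun _ _ _ => trivial, fun i j _ => Set.Subset.refl _⟩, ?_, ?_, ?_, ?_⟩
  · -- injective identifiers
    intro i j hi hj h
    rw [hlen3] at hi hj
    have h' : (if i = 2 then 2 else i) = (if j = 2 then 2 else j) := h
    split_ifs at h' <;> omega
  · -- casewise
    intro C hC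
    have : C = Cex1 ∨ C = Cex2 ∨ C = Cnew := by
      simpa [exDB, CLD.snoc] using hC
    rcases this with rfl | rfl | rfl
    · exact hcons1
    · exact hcons2
    · exact hconsnew
  · -- refConsistent
    intro j h pre fact refid hmem
    have h3 : j < 3 := h
    interval_cases j
    · simp [exDB, CLD.snoc, Cex1, PTree.leaves] at hmem
    · simp [exDB, CLD.snoc, Cex2, PTree.leaves] at hmem
    · have hm : pre = Form.top ∧ fact = f ∧ refid = k := by
        simpa [exDB, CLD.snoc, hCnew, PTree.leaves] using hmem
      obtain ⟨hm1, hm2, hm3⟩ := hm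
      subst hm1; subst hm2; subst hm3
      refine ⟨refid, hk, by omega, hmuk,
        PTree.leaf Form.top fact Lab.assess, ?_, rfl, ?_, trivial, fun w _ => trivial⟩
      · rw [hgetk]; exact rfl
      · rw [hgetk]; exact hwarr _ rfl
  · -- hierConsistent
    intro j h D hD con
    obtain ⟨-, -, h3c, h4⟩ := con
    have hDmem : D = Cex1 ∨ D = Cex2 ∨ D = Cnew := by
      simpa [exDB, CLD.snoc] using hD
    have hcrtD : D.crt = 2 := h4.2
    have hDnew : D = Cnew := by
      rcases hDmem with rfl | rfl | rfl
      · exact absurd hcrtD (by decide)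
      · exact absurd hcrtD (by decide)
      · rfl
    have hcrtj : ((exDB.snoc Cnew 2).cases.get ⟨j, h⟩).crt = 2 := h4.1
    have h3 : j < 3 := h
    interval_cases j
    · rw [show (exDB.snoc Cnew 2).cases.get ⟨0, h⟩ = Cex1 from rfl] at hcrtj
      exact absurd hcrtj (by decide)
    · rw [show (exDB.snoc Cnew 2).cases.get ⟨1, h⟩ = Cex2 from rfl] at hcrtj
      exact absurd hcrtj (by decide)
    · subst hDnew
      exact h3c w0 ⟨⟨trivial, hw⟩, hw⟩
  · -- warrantsConsistently
    intro j hj C hC pre fact refid hmem happ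
    have hCmem : C = Cex1 ∨ C = Cex2 ∨ C = Cnew := by
      simpa [exDB, CLD.snoc] using hC
    rcases hCmem with rfl | rfl | rfl
    · simp [Cex1, PTree.leaves] at hmem
    · simp [Cex2, PTree.leaves] at hmem
    · have hm : pre = Form.top ∧ fact = f ∧ refid = k := by
        simpa [hCnew, PTree.leaves] using hmem
      obtain ⟨hm1, hm2, hm3⟩ := hm
      subst hm1; subst hm2; subst hm3
      exfalso
      refine happ refid (by omega) hmuk (PTree.leaf Form.top fact Lab.assess) ?_ rfl ?_
      · rw [hgetk]; exact rfl
      · rw [hgetk]; exact hwarr _ rfl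

/-- there are a consistent database, circumstances and court, and
    a set (list) F of formulas such that each member of F is individually
    permitted but F itself is not permitted. -/
theorem exists_memberwise_permitted_not_set_permitted :
    ∃ (W CI Court : Type) (DB : CLD W CI Court) (cd : Form W) (crt : Court)
      (F : List (Form W)),
      DB.consistent ∧
      (∀ f ∈ F, DB.permitted f cd crt) ∧
      ¬ DB.permittedList F cd crt := by
  refine ⟨Bool, ℕ, Fin 3, exDB, Form.top, 2, [pF, npF], exDB_consistent, ?_, ?_⟩
  · -- each formula is individually permitted
    intro f hf
    simp only [List.mem_cons, List.mem_singleton, List.not_mem_nil, or_false] at hf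
    rcases hf with rfl | rfl
    · exact ⟨⟨pF, Form.top, PTree.leaf Form.top pF (Lab.ref 0), 2⟩, 2, rfl, rfl, rfl,
        trivial, snoc_consistent pF 0 true rfl 0 (by omega) rfl⟩
    · exact ⟨⟨npF, Form.top, PTree.leaf Form.top npF (Lab.ref 1), 2⟩, 2, rfl, rfl, rfl,
        trivial, snoc_consistent npF 1 false (by simp [npF, pF, Form.not]) 1 (by omega) rfl⟩
  · -- but the pair is not
    rintro ⟨Cs, ids, hperm, hprops, hcons⟩
    have hmemp : pF ∈ Cs.map Case.df := (hperm.mem_iff).2 (by simp)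
    have hmemn : npF ∈ Cs.map Case.df := (hperm.mem_iff).2 (by simp)
    obtain ⟨A, hA, hAdf⟩ := List.mem_map.1 hmemp
    obtain ⟨B, hB, hBdf⟩ := List.mem_map.1 hmemn
    set DB' := exDB.appendCases Cs ids with hDB'
    have hcaseseq : DB'.cases = [Cex1, Cex2] ++ Cs := rfl
    have hAfull : A ∈ DB'.cases := by rw [hcaseseq]; exact List.mem_append_right _ hA
    have hBfull : B ∈ DB'.cases := by rw [hcaseseq]; exact List.mem_append_right _ hB
    obtain ⟨n, hnA⟩ := List.mem_iff_get.1 hA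
    have hlenCs : DB'.cases.length = 2 + Cs.length := by rw [hcaseseq]; simp; omega
    have hlt : 2 + n.1 < DB'.cases.length := by have := n.2; omega
    have hgetA : DB'.cases.get ⟨2 + n.1, hlt⟩ = A := by
      rw [← hnA]
      show ([Cex1, Cex2] ++ Cs).get ⟨2 + n.1, hlt⟩ = Cs.get n
      rw [List.get_eq_getElem, List.get_eq_getElem]
      rw [List.getElem_append_right (by simp)]
      simp
    have hconsA : consistentCase (Form.top) A := hcons.2.1 A hAfull
    have hconsB : consistentCase (Form.top) B := hcons.2.1 B hBfull
    obtain ⟨hdA, hcA, -⟩ := hprops A hA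
    obtain ⟨hdB, hcB, -⟩ := hprops B hB
    apply hcons.2.2.2.1 (2 + n.1) hlt B hBfull
    rw [hgetA]
    have hU : DB'.U (2 + n.1) = ∅ := rfl
    rw [hU]
    refine ⟨?_, ?_, ?_, ?_⟩
    · -- B is warranted
      unfold CLD.warrantedCase
      rw [blockTree_empty]
      exact hconsB
    · -- prerequisites compatible
      intro hent
      refine hent true ⟨⟨trivial, ?_⟩, ?_⟩
      · exact hconsA.2.2.1 true ⟨trivial, by rw [hdA]; trivial⟩
      · exact hconsB.2.2.1 true ⟨trivial, by rw [hdB]; trivial⟩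
    · -- facts contradict
      intro w hw
      obtain ⟨⟨-, hfa⟩, hfb⟩ := hw
      have ha : A.df w := by
        rw [← hconsA.1.1]
        exact ent_facts_rootF A.tree hconsA.2.2.2.2 w hfa
      have hb : B.df w := by
        rw [← hconsB.1.1]
        exact ent_facts_rootF B.tree hconsB.2.2.2.2 w hfb
      rw [hAdf] at ha
      rw [hBdf] at hb
      exact hb ha
    · -- must-agree between the two top-court cases
      exact ⟨hcA, hcB⟩

end PriCL
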